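/- Let ρ₀ ∈ (0,1), C = {p ∈ ℝ² : ρ₀ ≤ ‖p‖ ≤ 1} and C* = {p ∈ ℝ² : ρ₀ ≤ ‖p‖ < 1}. Let (τ_k)_{k≥1} be positive reals with ∑_k τ_k < ∞ and let A ≥ 0. Let (f_k)_{k≥0} be maps from ℝ² to ℝ³, each continuously differentiable on a neighborhood of C, and let (g_k)_{k≥0} be continuous fields of symmetric bilinear forms on C such that g_k(p) converges to h(p) as k → ∞ for every p ∈ C*. Assume for every k ≥ 1 and every p ∈ C: (P1) ‖g_k(p) − (f_k*⟨,⟩)(p)‖ ≤ ‖g_{k+1}(p) − g_k(p)‖; (P2) ‖f_k(p) − f_{k−1}(p)‖ ≤ τ_k; (P3) ‖Df_k(p) − Df_{k−1}(p)‖ ≤ τ_k + A·‖g_k(p) − (f_{k−1}*⟨,⟩)(p)‖^{1/2}; and (P4) for every compact K ⊆ C*, ∑_k (sup_{p∈K} ‖g_k(p) − g_{k−1}(p)‖)^{1/2} < ∞. Then the sequence (f_k) converges uniformly on C to a continuous map f_∞, and on the open annulus {p : ρ₀ < ‖p‖ < 1} the map f_∞ is continuously differentiable and h-isometric: ⟨Df_∞(p)u,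 Df_∞(p)v⟩ = h(p)(u,v) for all u, v ∈ ℝ². -/

import Mathlib

open scoped RealInnerProductSpace

noncomputable section

abbrev E2 := EuclideanSpace ℝ (Fin 2)
abbrev E3 := EuclideanSpace ℝ (Fin 3)

/-- The norm `‖b‖ = sup_{v ≠ 0} |b(v,v)|/‖v‖²` of a symmetric bilinear form on `ℝ²`. -/
noncomputable def bnorm (b : E2 →ₗ[ℝ] E2 →ₗ[ℝ] ℝ) : ℝ :=
  ⨆ v : E2, |b v v| / ‖v‖ ^ 2

/-- The pullback metric `(f*⟨,⟩)(p)` of a map `f : ℝ² → ℝ³` at the point `p`,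
as a bilinear form on `ℝ²`. -/
noncomputable def pullbackForm (f : E2 → E3) (p : E2) : E2 →ₗ[ℝ] E2 →ₗ[ℝ] ℝ :=
  LinearMap.mk₂ ℝ (fun u v => ⟪fderiv ℝ f p u, fderiv ℝ f p v⟫)
    (fun u u' v => by simp [map_add, inner_add_left])
    (fun c u v => by simp [map_smul, real_inner_smul_left, Finset.mul_sum, mul_assoc])
    (fun u v v' => by simp [map_add, inner_add_right])
    (fun c u v => by simp [map_smul, real_inner_smul_right, Finset.mul_sum] <;> exact Finset.sum_congr rfl fun i _ => by ring)

open Filter Metric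
open scoped Topology

noncomputable def entrySum (b : E2 →ₗ[ℝ] E2 →ₗ[ℝ] ℝ) : ℝ :=
  ∑ i : Fin 2, ∑ j : Fin 2,
    |b (EuclideanSpace.basisFun (Fin 2) ℝ i) (EuclideanSpace.basisFun (Fin 2) ℝ j)|

lemma abs_apply_le_entrySum (b : E2 →ₗ[ℝ] E2 →ₗ[ℝ] ℝ) (v : E2) :
    |b v v| ≤ entrySum b * ‖v‖ ^ 2 := by
  set e := EuclideanSpace.basisFun (Fin 2) ℝ with he
  have hcoord : ∀ i : Fin 2, |v i| ≤ ‖v‖ := by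
    intro i
    have h2 : ‖v‖ = Real.sqrt (∑ j : Fin 2, ‖v j‖ ^ 2) := EuclideanSpace.norm_eq v
    have h1 : ‖v i‖ ^ 2 ≤ ∑ j : Fin 2, ‖v j‖ ^ 2 :=
      Finset.single_le_sum (f := fun j => ‖v j‖ ^ 2) (fun j _ => sq_nonneg _) (Finset.mem_univ i)
    have : ‖v i‖ ≤ ‖v‖ := by
      rw [h2]; exact Real.le_sqrt_of_sq_le h1
    simpa using this
  have expand : ∀ u w : E2, b u w =
      ∑ i : Fin 2, ∑ j : Fin 2, u i * w j * b (e i) (e j) := by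
    intro u w
    have hu : u = ∑ i : Fin 2, u i • (e i : E2) := by
      have := (e : OrthonormalBasis (Fin 2) ℝ E2).sum_repr' u
      simpa [he, EuclideanSpace.basisFun_repr, EuclideanSpace.inner_single_left] using this.symm
    have hw : w = ∑ j : Fin 2, w j • (e j : E2) := by
      have := (e : OrthonormalBasis (Fin 2) ℝ E2).sum_repr' w
      simpa [he, EuclideanSpace.basisFun_repr, EuclideanSpace.inner_single_left] using this.symm
    conv_lhs => rw [hu, hw]
    simp only [map_sum, map_smul, LinearMap.sum_apply, LinearMap.smul_apply, smul_eq_mul]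
    rw [Finset.sum_comm]
    refine Finset.sum_congr rfl fun i _ => ?_
    rw [Finset.mul_sum]
    exact Finset.sum_congr rfl fun j _ => by ring
  calc |b v v| = |∑ i : Fin 2, ∑ j : Fin 2, v i * v j * b (e i) (e j)| := by rw [expand]
    _ ≤ ∑ i : Fin 2, ∑ j : Fin 2, |v i * v j * b (e i) (e j)| :=
        (Finset.abs_sum_le_sum_abs _ _).trans (Finset.sum_le_sum fun i _ =>
          Finset.abs_sum_le_sum_abs _ _)
    _ ≤ ∑ i : Fin 2, ∑ j : Fin 2, |b (e i) (e j)| * ‖v‖ ^ 2 := by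
        refine Finset.sum_le_sum fun i _ => Finset.sum_le_sum fun j _ => ?_
        rw [abs_mul, abs_mul]
        have key := mul_le_mul (hcoord i) (hcoord j) (abs_nonneg (v j)) (norm_nonneg v)
        have hb := abs_nonneg (b (e i) (e j))
        nlinarith [abs_nonneg (v i), abs_nonneg (v j)]
    _ = entrySum b * ‖v‖ ^ 2 := by
        rw [entrySum, Finset.sum_mul]
        exact Finset.sum_congr rfl fun i _ => by
          rw [Finset.sum_mul]

lemma entrySum_nonneg (b : E2 →ₗ[ℝ] E2 →ₗ[ℝ] ℝ) : 0 ≤ entrySum b :=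
  Finset.sum_nonneg fun i _ => Finset.sum_nonneg fun j _ => abs_nonneg _

lemma bnorm_bddAbove (b : E2 →ₗ[ℝ] E2 →ₗ[ℝ] ℝ) :
    BddAbove (Set.range fun v : E2 => |b v v| / ‖v‖ ^ 2) := by
  refine ⟨entrySum b, ?_⟩
  rintro x ⟨v, rfl⟩
  rcases eq_or_ne v 0 with rfl | hv
  · simp [entrySum_nonneg b]
  · rw [div_le_iff₀ (pow_pos (norm_pos_iff.mpr hv) 2)]
    exact abs_apply_le_entrySum b v

lemma bnorm_nonneg (b : E2 →ₗ[ℝ] E2 →ₗ[ℝ] ℝ) : 0 ≤ bnorm b := by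
  have := le_ciSup (bnorm_bddAbove b) (0 : E2)
  simpa [bnorm] using this

lemma abs_apply_le_bnorm (b : E2 →ₗ[ℝ] E2 →ₗ[ℝ] ℝ) (v : E2) :
    |b v v| ≤ bnorm b * ‖v‖ ^ 2 := by
  rcases eq_or_ne v 0 with rfl | hv
  · simp
  · have h := le_ciSup (bnorm_bddAbove b) v
    rw [bnorm]
    rw [div_le_iff₀ (pow_pos (norm_pos_iff.mpr hv) 2)] at h
    exact h

lemma bnorm_le (b : E2 →ₗ[ℝ] E2 →ₗ[ℝ] ℝ) {M : ℝ} (hM : 0 ≤ M)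
    (h : ∀ v : E2, |b v v| ≤ M * ‖v‖ ^ 2) : bnorm b ≤ M := by
  refine ciSup_le fun v => ?_
  rcases eq_or_ne v 0 with rfl | hv
  · simpa using hM
  · rw [div_le_iff₀ (pow_pos (norm_pos_iff.mpr hv) 2)]
    exact h v

lemma bnorm_le_entrySum (b : E2 →ₗ[ℝ] E2 →ₗ[ℝ] ℝ) : bnorm b ≤ entrySum b :=
  bnorm_le b (entrySum_nonneg b) (abs_apply_le_entrySum b)

lemma bnorm_add_le (a b : E2 →ₗ[ℝ] E2 →ₗ[ℝ] ℝ) : bnorm (a + b) ≤ bnorm a + bnorm b := by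
  refine bnorm_le _ (by have := bnorm_nonneg a; have := bnorm_nonneg b; linarith) fun v => ?_
  calc |(a + b) v v| = |a v v + b v v| := by simp
    _ ≤ |a v v| + |b v v| := abs_add_le _ _
    _ ≤ bnorm a * ‖v‖ ^ 2 + bnorm b * ‖v‖ ^ 2 :=
        add_le_add (abs_apply_le_bnorm a v) (abs_apply_le_bnorm b v)
    _ = (bnorm a + bnorm b) * ‖v‖ ^ 2 := by ring

/-- polarization bound for symmetric forms -/
lemma abs_apply₂_le_bnorm (b : E2 →ₗ[ℝ] E2 →ₗ[ℝ] ℝ)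
    (hsym : ∀ u v : E2, b u v = b v u) (u v : E2) :
    |b u v| ≤ bnorm b * ((‖u‖ ^ 2 + ‖v‖ ^ 2) / 2) := by
  have hpol : 4 * b u v = b (u + v) (u + v) - b (u - v) (u - v) := by
    have h1 := hsym u v
    simp only [map_add, map_sub, LinearMap.add_apply, LinearMap.sub_apply]
    linarith
  have h1 := abs_apply_le_bnorm b (u + v)
  have h2 := abs_apply_le_bnorm b (u - v)
  have hpar : ‖u + v‖ ^ 2 + ‖u - v‖ ^ 2 = 2 * (‖u‖ ^ 2 + ‖v‖ ^ 2) := by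
    have := parallelogram_law_with_norm ℝ u v
    nlinarith [norm_nonneg (u+v), norm_nonneg (u-v), norm_nonneg u, norm_nonneg v]
  have h3 : |4 * b u v| ≤ bnorm b * ‖u + v‖ ^ 2 + bnorm b * ‖u - v‖ ^ 2 := by
    rw [hpol]
    exact (abs_sub _ _).trans (add_le_add h1 h2)
  have hb := bnorm_nonneg b
  rw [abs_mul] at h3
  simp only [abs_of_nonneg (by norm_num : (0:ℝ) ≤ 4)] at h3
  nlinarith

lemma pullbackForm_apply (f : E2 → E3) (p u v : E2) :
    pullbackForm f p u v = ⟪fderiv ℝ f p u, fderiv ℝ f p v⟫ := rfl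


set_option maxHeartbeats 1000000 in
/-- Nash–Kuiper convergence (Proposition 2.1): under (P1)–(P4), the maps `f_k` converge
uniformly on the closed annulus `C` to a continuous map which, on the open annulus, is a
`C¹` isometric immersion for the hyperbolic metric. -/
theorem stmt1 (ρ₀ : ℝ) (hρ₀ : 0 < ρ₀) (hρ₀1 : ρ₀ < 1)
    (C Cstar : Set E2)
    (hC : C = {p : E2 | ρ₀ ≤ ‖p‖ ∧ ‖p‖ ≤ 1})
    (hCstar : Cstar = {p : E2 | ρ₀ ≤ ‖p‖ ∧ ‖p‖ < 1})
    (τ : ℕ → ℝ) (hτpos : ∀ k, 0 < τ k) (hτsum : Summable τ)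
    (A : ℝ) (hA : 0 ≤ A)
    (f : ℕ → E2 → E3)
    (hfC1 : ∀ k, ∃ U : Set E2, IsOpen U ∧ C ⊆ U ∧ ContDiffOn ℝ 1 (f k) U)
    (g : ℕ → E2 → (E2 →ₗ[ℝ] E2 →ₗ[ℝ] ℝ))
    (hgsymm : ∀ k, ∀ p ∈ C, ∀ u v : E2, g k p u v = g k p v u)
    (hgcont : ∀ k, ∀ u v : E2, ContinuousOn (fun p => g k p u v) C)
    (hgconv : ∀ p ∈ Cstar, ∀ u v : E2,
      Filter.Tendsto (fun k => g k p u v) Filter.atTop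
        (nhds (4 * ⟪u, v⟫ / (1 - ‖p‖ ^ 2) ^ 2)))
    -- (P1)
    (hP1 : ∀ k : ℕ, ∀ p ∈ C,
      bnorm (g (k + 1) p - pullbackForm (f (k + 1)) p) ≤ bnorm (g (k + 2) p - g (k + 1) p))
    -- (P2)
    (hP2 : ∀ k : ℕ, ∀ p ∈ C, ‖f (k + 1) p - f k p‖ ≤ τ (k + 1))
    -- (P3)
    (hP3 : ∀ k : ℕ, ∀ p ∈ C,
      ‖fderiv ℝ (f (k + 1)) p - fderiv ℝ (f k) p‖
        ≤ τ (k + 1) + A * Real.sqrt (bnorm (g (k + 1) p - pullbackForm (f k) p)))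
    -- (P4)
    (hP4 : ∀ K : Set E2, K ⊆ Cstar → IsCompact K →
      Summable (fun k : ℕ => Real.sqrt (⨆ p : K, bnorm (g (k + 1) (p : E2) - g k (p : E2))))) :
    ∃ flim : E2 → E3,
      TendstoUniformlyOn f flim Filter.atTop C ∧
      ContinuousOn flim C ∧
      ContDiffOn ℝ 1 flim {p : E2 | ρ₀ < ‖p‖ ∧ ‖p‖ < 1} ∧
      ∀ p : E2, ρ₀ < ‖p‖ → ‖p‖ < 1 → ∀ u v : E2,
        ⟪fderiv ℝ flim p u, fderiv ℝ flim p v⟫ = 4 * ⟪u, v⟫ / (1 - ‖p‖ ^ 2) ^ 2 := by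
  classical
  -- basic facts
  have hCstarC : Cstar ⊆ C := by rw [hC, hCstar]; exact fun p hp => ⟨hp.1, le_of_lt hp.2⟩
  have hcont_f : ∀ k, ContinuousOn (f k) C := by
    intro k
    obtain ⟨U, hUo, hCU, hcd⟩ := hfC1 k
    exact (hcd.continuousOn).mono hCU
  have hdiff_f : ∀ k, ∀ p ∈ C, DifferentiableAt ℝ (f k) p := by
    intro k p hp
    obtain ⟨U, hUo, hCU, hcd⟩ := hfC1 k
    exact ((hcd.differentiableOn one_ne_zero) p (hCU hp)).differentiableAt (hUo.mem_nhds (hCU hp))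
  have hfderiv_cont : ∀ k, ContinuousOn (fun q => fderiv ℝ (f k) q) C := by
    intro k
    obtain ⟨U, hUo, hCU, hcd⟩ := hfC1 k
    exact (hcd.continuousOn_fderiv_of_isOpen hUo le_rfl).mono hCU
  -- the uniform limit F
  set d : ℕ → E2 → E3 := fun k p => f (k + 1) p - f k p with hd
  have hτ1 : Summable fun k => τ (k + 1) := (_root_.summable_nat_add_iff 1).2 hτsum
  have hser : TendstoUniformlyOn (fun N p => ∑ k ∈ Finset.range N, d k p)
      (fun p => ∑' k, d k p) atTop C :=
    tendstoUniformlyOn_tsum_nat hτ1 (fun k p hp => by simpa [hd] using hP2 k p hp)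
  set F : E2 → E3 := fun p => f 0 p + ∑' k, d k p with hF
  have htel : ∀ N p, f N p = f 0 p + ∑ k ∈ Finset.range N, d k p := by
    intro N p
    have := Finset.sum_range_sub (fun k => f k p) N
    simp only [hd]
    rw [this]
    abel
  have hFtendsto : TendstoUniformlyOn f F atTop C := by
    rw [tendstoUniformlyOn_iff] at hser ⊢
    intro ε hε
    filter_upwards [hser ε hε] with N hN p hp
    have := hN p hp
    rw [hF]
    simp only [htel N p, dist_add_left]
    exact this
  have hFcont : ContinuousOn F C :=
    hFtendsto.continuousOn (Filter.Eventually.of_forall fun n => hcont_f n).frequently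
  have hFptwise : ∀ p ∈ C, Tendsto (fun n => f n p) atTop (𝓝 (F p)) :=
    fun p hp => hFtendsto.tendsto_at hp
  -- the key local statement
  have key : ∀ p : E2, ρ₀ < ‖p‖ → ‖p‖ < 1 → ∃ r > 0,
      (Metric.ball p r ⊆ C) ∧ ∃ G : E2 → (E2 →L[ℝ] E3),
      TendstoUniformlyOn (fun n q => fderiv ℝ (f (n + 1)) q) G atTop (Metric.ball p r) ∧
      (∀ x ∈ Metric.ball p r, HasFDerivAt F (G x) x) ∧
      ContinuousOn G (Metric.ball p r) := by
    intro p hp1 hp2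
    set r : ℝ := min ((‖p‖ - ρ₀) / 2) ((1 - ‖p‖) / 2) with hrdef
    have hrpos : 0 < r := lt_min (by linarith) (by linarith)
    set K : Set E2 := Metric.closedBall p r with hKdef
    have hKCstar : K ⊆ Cstar := by
      intro q hq
      rw [hKdef, Metric.mem_closedBall, dist_eq_norm] at hq
      have h2 := abs_norm_sub_norm_le q p
      have h3 := abs_le.1 (h2.trans hq)
      have hr1 : r ≤ (‖p‖ - ρ₀) / 2 := min_le_left _ _
      have hr2 : r ≤ (1 - ‖p‖) / 2 := min_le_right _ _
      rw [hCstar]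
      exact ⟨by linarith [h3.2], by linarith [h3.1]⟩
    have hKC : K ⊆ C := hKCstar.trans hCstarC
    have hKcomp : IsCompact K := isCompact_closedBall p r
    have hballK : Metric.ball p r ⊆ K := Metric.ball_subset_closedBall
    set σ : ℕ → ℝ := fun j => ⨆ q : K, bnorm (g (j + 1) (q : E2) - g j (q : E2)) with hσdef
    -- boundedness of the sup defining σ
    have hbddA : ∀ j : ℕ,
        BddAbove (Set.range fun q : K => bnorm (g (j + 1) (q : E2) - g j (q : E2))) := by
      intro j
      have hcontE : ContinuousOn (fun q => entrySum (g (j + 1) q - g j q)) C := by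
        apply continuousOn_finset_sum
        intro i _
        apply continuousOn_finset_sum
        intro jj _
        have h1 := hgcont (j + 1) (EuclideanSpace.basisFun (Fin 2) ℝ i)
          (EuclideanSpace.basisFun (Fin 2) ℝ jj)
        have h2 := hgcont j (EuclideanSpace.basisFun (Fin 2) ℝ i)
          (EuclideanSpace.basisFun (Fin 2) ℝ jj)
        have : ContinuousOn (fun q => g (j + 1) q (EuclideanSpace.basisFun (Fin 2) ℝ i)
            (EuclideanSpace.basisFun (Fin 2) ℝ jj) - g j q (EuclideanSpace.basisFun (Fin 2) ℝ i)
            (EuclideanSpace.basisFun (Fin 2) ℝ jj)) C := h1.sub h2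
        simpa [LinearMap.sub_apply] using this.abs
      obtain ⟨M, hM⟩ := (hKcomp.bddAbove_image (hcontE.mono hKC))
      refine ⟨M, ?_⟩
      rintro x ⟨q, rfl⟩
      calc bnorm (g (j + 1) (q : E2) - g j (q : E2))
          ≤ entrySum (g (j + 1) (q : E2) - g j (q : E2)) := bnorm_le_entrySum _
        _ ≤ M := hM (Set.mem_image_of_mem _ q.2)
    have hpK : p ∈ K := Metric.mem_closedBall_self hrpos.le
    have hσ_le : ∀ j : ℕ, ∀ q ∈ K, bnorm (g (j + 1) q - g j q) ≤ σ j :=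
      fun j q hq => le_ciSup (hbddA j) (⟨q, hq⟩ : K)
    have hσ_nonneg : ∀ j, 0 ≤ σ j :=
      fun j => (bnorm_nonneg _).trans (hσ_le j p hpK)
    -- the summable majorant
    set u : ℕ → ℝ := fun k => τ (k + 2) + 2 * A * Real.sqrt (σ (k + 1)) with hudef
    have husum : Summable u := by
      have hsum1 : Summable fun k => τ (k + 2) := (_root_.summable_nat_add_iff 2).2 hτsum
      have hP4' : Summable fun k => Real.sqrt (σ k) := by
        rw [hσdef]; exact hP4 K hKCstar hKcomp
      have hsum2 : Summable fun k => Real.sqrt (σ (k + 1)) :=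
        (_root_.summable_nat_add_iff 1).2 hP4'
      exact hsum1.add (hsum2.mul_left (2 * A))
    -- pointwise derivative increments are bounded by u
    have hDbound : ∀ k : ℕ, ∀ q ∈ K,
        ‖fderiv ℝ (f (k + 2)) q - fderiv ℝ (f (k + 1)) q‖ ≤ u k := by
      intro k q hq
      have hqC : q ∈ C := hKC hq
      have h3 := hP3 (k + 1) q hqC
      have hsplit : bnorm (g (k + 2) q - pullbackForm (f (k + 1)) q)
          ≤ σ (k + 1) + σ (k + 1) := by
        have heq : g (k + 2) q - pullbackForm (f (k + 1)) q
            = (g (k + 2) q - g (k + 1) q) + (g (k + 1) q - pullbackForm (f (k + 1)) q) := by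
          abel
        rw [heq]
        have hb1 : bnorm (g (k + 2) q - g (k + 1) q) ≤ σ (k + 1) := hσ_le (k + 1) q hq
        have hb2 : bnorm (g (k + 1) q - pullbackForm (f (k + 1)) q) ≤ σ (k + 1) :=
          (hP1 k q hqC).trans (hσ_le (k + 1) q hq)
        exact (bnorm_add_le _ _).trans (add_le_add hb1 hb2)
      have hsqrt : Real.sqrt (bnorm (g (k + 2) q - pullbackForm (f (k + 1)) q))
          ≤ 2 * Real.sqrt (σ (k + 1)) := by
        have h5 : Real.sqrt (bnorm (g (k + 2) q - pullbackForm (f (k + 1)) q))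
            ≤ Real.sqrt (σ (k + 1) + σ (k + 1)) := Real.sqrt_le_sqrt hsplit
        refine h5.trans ?_
        have h6 : σ (k + 1) + σ (k + 1) ≤ 4 * σ (k + 1) := by
          have := hσ_nonneg (k + 1); linarith
        have h7 : Real.sqrt (σ (k + 1) + σ (k + 1)) ≤ Real.sqrt (4 * σ (k + 1)) :=
          Real.sqrt_le_sqrt h6
        refine h7.trans ?_
        rw [show (4 : ℝ) * σ (k + 1) = (2 : ℝ) ^ 2 * σ (k + 1) by norm_num,
          Real.sqrt_mul (by positivity) _, Real.sqrt_sq (by norm_num : (0:ℝ) ≤ 2)]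
      calc ‖fderiv ℝ (f (k + 2)) q - fderiv ℝ (f (k + 1)) q‖
          ≤ τ (k + 2) + A * Real.sqrt (bnorm (g (k + 2) q - pullbackForm (f (k + 1)) q)) := h3
        _ ≤ τ (k + 2) + A * (2 * Real.sqrt (σ (k + 1))) := by
            have := mul_le_mul_of_nonneg_left hsqrt hA
            linarith
        _ = u k := by rw [hudef]; ring
    -- uniform convergence of the derivatives
    set D : ℕ → E2 → (E2 →L[ℝ] E3) :=
      fun k q => fderiv ℝ (f (k + 2)) q - fderiv ℝ (f (k + 1)) q with hDdef
    have hser2 : TendstoUniformlyOn (fun N q => ∑ k ∈ Finset.range N, D k q)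
        (fun q => ∑' k, D k q) atTop K :=
      tendstoUniformlyOn_tsum_nat husum (fun k q hq => hDbound k q hq)
    set G : E2 → (E2 →L[ℝ] E3) := fun q => fderiv ℝ (f 1) q + ∑' k, D k q with hGdef
    have htel2 : ∀ N q, fderiv ℝ (f (N + 1)) q
        = fderiv ℝ (f 1) q + ∑ k ∈ Finset.range N, D k q := by
      intro N q
      have := Finset.sum_range_sub (fun k => fderiv ℝ (f (k + 1)) q) N
      simp only [hDdef]
      rw [this]
      abel
    have hGu : TendstoUniformlyOn (fun n q => fderiv ℝ (f (n + 1)) q) G atTop K := by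
      rw [tendstoUniformlyOn_iff] at hser2 ⊢
      intro ε hε
      filter_upwards [hser2 ε hε] with N hN q hq
      have := hN q hq
      rw [hGdef]
      simp only [htel2 N q, dist_add_left]
      exact this
    have hGuball : TendstoUniformlyOn (fun n q => fderiv ℝ (f (n + 1)) q) G atTop
        (Metric.ball p r) := hGu.mono hballK
    have hGd : ∀ x ∈ Metric.ball p r, HasFDerivAt F (G x) x := by
      intro x hx
      refine hasFDerivAt_of_tendstoUniformlyOn Metric.isOpen_ball hGuball
        (fun n y hy => (hdiff_f (n + 1) y (hKC (hballK hy))).hasFDerivAt)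
        (fun y hy => (hFptwise y (hKC (hballK hy))).comp (tendsto_add_atTop_nat 1)) hx
    have hGc : ContinuousOn G (Metric.ball p r) :=
      (hGu.continuousOn (Filter.Eventually.of_forall
        (fun n => (hfderiv_cont (n + 1)).mono hKC)).frequently).mono hballK
    exact ⟨r, hrpos, hballK.trans hKC, G, hGuball, hGd, hGc⟩
  refine ⟨F, hFtendsto, hFcont, ?_, ?_⟩
  · -- ContDiffOn
    intro x hx
    obtain ⟨r, hr, hballC, G, hGu, hGd, hGc⟩ := key x hx.1 hx.2
    have hball : ContDiffOn ℝ 1 F (Metric.ball x r) := by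
      have h1 : (1 : WithTop ℕ∞) = 0 + 1 := by norm_num
      rw [h1, contDiffOn_succ_iff_fderiv_of_isOpen Metric.isOpen_ball]
      refine ⟨fun y hy => ((hGd y hy).differentiableAt).differentiableWithinAt, ?_, ?_⟩
      · intro h; exact absurd h (by norm_num)
      · rw [contDiffOn_zero]
        have : Set.EqOn (fderiv ℝ F) G (Metric.ball x r) := fun y hy => (hGd y hy).fderiv
        exact ContinuousOn.congr hGc this
    exact (hball.contDiffAt (Metric.isOpen_ball.mem_nhds (Metric.mem_ball_self hr))).contDiffWithinAt
  · -- isometry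
    intro p hp1 hp2 u v
    obtain ⟨r, hr, hballC, G, hGu, hGd, hGc⟩ := key p hp1 hp2
    have hpball : p ∈ Metric.ball p r := Metric.mem_ball_self hr
    have hpC : p ∈ C := hballC hpball
    have hpCstar : p ∈ Cstar := by rw [hCstar]; exact ⟨le_of_lt hp1, hp2⟩
    have hfderivF : fderiv ℝ F p = G p := (hGd p hpball).fderiv
    rw [hfderivF]
    -- convergence of derivatives at p
    have hDconv : Tendsto (fun n => fderiv ℝ (f (n + 1)) p) atTop (𝓝 (G p)) :=
      hGu.tendsto_at hpball
    have happly : ∀ w : E2, Tendsto (fun n => fderiv ℝ (f (n + 1)) p w) atTop (𝓝 (G p w)) := by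
      intro w
      exact ((ContinuousLinearMap.apply ℝ E3 w).continuous.tendsto (G p)).comp hDconv
    have hpb : Tendsto (fun n => (pullbackForm (f (n + 1)) p) u v) atTop (𝓝 ⟪G p u, G p v⟫) := by
      have := Filter.Tendsto.inner (𝕜 := ℝ) (happly u) (happly v)
      simpa [pullbackForm] using this
    -- bnorm (g (n+2) p - g (n+1) p) → 0
    have hbn0 : Tendsto (fun n => bnorm (g (n + 2) p - g (n + 1) p)) atTop (𝓝 0) := by
      have hsing : Summable (fun k => Real.sqrt (bnorm (g (k + 1) p - g k p))) := by
        have h := hP4 {p} (by simpa using hpCstar) isCompact_singleton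
        have heq : ∀ k : ℕ, (⨆ q : ({p} : Set E2), bnorm (g (k + 1) (q : E2) - g k (q : E2)))
            = bnorm (g (k + 1) p - g k p) := by
          intro k
          exact ciSup_unique
        simpa only [heq] using h
      have hsq0 : Tendsto (fun k => Real.sqrt (bnorm (g (k + 1) p - g k p))) atTop (𝓝 0) :=
        hsing.tendsto_atTop_zero
      have htend : Tendsto (fun k => bnorm (g (k + 1) p - g k p)) atTop (𝓝 0) := by
        have h2 : (fun k => Real.sqrt (bnorm (g (k + 1) p - g k p))
            * Real.sqrt (bnorm (g (k + 1) p - g k p)))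
            = fun k => bnorm (g (k + 1) p - g k p) :=
          funext fun k => Real.mul_self_sqrt (bnorm_nonneg _)
        have h3 := hsq0.mul hsq0
        rw [h2] at h3
        simpa using h3
      exact htend.comp (tendsto_add_atTop_nat 1)
    -- |g (n+1) p u v - pb| → 0
    have hdiff0 : Tendsto (fun n => g (n + 1) p u v - (pullbackForm (f (n + 1)) p) u v)
        atTop (𝓝 0) := by
      have hbound : ∀ n : ℕ, ‖g (n + 1) p u v - (pullbackForm (f (n + 1)) p) u v‖
          ≤ bnorm (g (n + 2) p - g (n + 1) p) * ((‖u‖ ^ 2 + ‖v‖ ^ 2) / 2) := by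
        intro n
        have hsym : ∀ a b : E2, (g (n + 1) p - pullbackForm (f (n + 1)) p) a b
            = (g (n + 1) p - pullbackForm (f (n + 1)) p) b a := by
          intro a b
          simp only [LinearMap.sub_apply, pullbackForm_apply]
          rw [hgsymm (n + 1) p hpC a b, real_inner_comm]
        have h1 := abs_apply₂_le_bnorm _ hsym u v
        have h2 := hP1 n p hpC
        have h3 : (0 : ℝ) ≤ (‖u‖ ^ 2 + ‖v‖ ^ 2) / 2 := by positivity
        calc ‖g (n + 1) p u v - (pullbackForm (f (n + 1)) p) u v‖
            = |(g (n + 1) p - pullbackForm (f (n + 1)) p) u v| := by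
              simp [LinearMap.sub_apply, Real.norm_eq_abs]
          _ ≤ bnorm (g (n + 1) p - pullbackForm (f (n + 1)) p) * ((‖u‖ ^ 2 + ‖v‖ ^ 2) / 2) := h1
          _ ≤ bnorm (g (n + 2) p - g (n + 1) p) * ((‖u‖ ^ 2 + ‖v‖ ^ 2) / 2) :=
              mul_le_mul_of_nonneg_right h2 h3
      have ha : Tendsto (fun n => bnorm (g (n + 2) p - g (n + 1) p)
          * ((‖u‖ ^ 2 + ‖v‖ ^ 2) / 2)) atTop (𝓝 0) := by
        simpa using hbn0.mul_const ((‖u‖ ^ 2 + ‖v‖ ^ 2) / 2)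
      exact squeeze_zero_norm hbound ha
    have hgc : Tendsto (fun n => g (n + 1) p u v) atTop (𝓝 (4 * ⟪u, v⟫ / (1 - ‖p‖ ^ 2) ^ 2)) :=
      (hgconv p hpCstar u v).comp (tendsto_add_atTop_nat 1)
    have : Tendsto (fun n => (pullbackForm (f (n + 1)) p) u v) atTop
        (𝓝 (4 * ⟪u, v⟫ / (1 - ‖p‖ ^ 2) ^ 2)) := by
      have := hgc.sub hdiff0
      simpa using this
    exact tendsto_nhds_unique hpb this
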